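/- Let A, Â be symmetric positive semidefinite matrices in ℝ^{k×k} with rank(Â) = rank(A) and ‖Â − A‖_op ≤ λ_*(A)/2, where λ_*(A) is the smallest positive eigenvalue of A. Then ‖Â† − A†‖_op ≤ C (‖Â − A‖_op) / λ_*(A)² for a universal constant C. -/

import Mathlib

open Matrix

/-- Operator (spectral) norm of a real matrix. -/
noncomputable def matOpNorm {m n : ℕ} (M : Matrix (Fin m) (Fin n) ℝ) : ℝ :=
  ‖LinearMap.toContinuousLinearMap (Matrix.toEuclideanLin M)‖

/-- `B` is the Moore–Penrose pseudoinverse of `A`. -/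
def IsMP {m n : Type*} [Fintype m] [Fintype n] [DecidableEq m] [DecidableEq n]
    (A : Matrix m n ℝ) (B : Matrix n m ℝ) : Prop :=
  A * B * A = A ∧ B * A * B = B ∧ (A * B)ᵀ = A * B ∧ (B * A)ᵀ = B * A

/-- Smallest positive eigenvalue of a PSD matrix. -/
noncomputable def lamStar {k : ℕ} {A : Matrix (Fin k) (Fin k) ℝ}
    (hA : A.PosSemidef) : ℝ :=
  sInf {t : ℝ | 0 < t ∧ ∃ i, hA.1.eigenvalues i = t}

namespace PSDaux

variable {k : ℕ}

local notation "E" => EuclideanSpace ℝ (Fin k)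
local notation "f" => Matrix.toEuclideanLin (𝕜 := ℝ) (m := Fin k) (n := Fin k)

lemma matOpNorm_nonneg (M : Matrix (Fin k) (Fin k) ℝ) : 0 ≤ matOpNorm M := norm_nonneg _

lemma le_matOpNorm (M : Matrix (Fin k) (Fin k) ℝ) (x : E) :
    ‖f M x‖ ≤ matOpNorm M * ‖x‖ :=
  (LinearMap.toContinuousLinearMap (Matrix.toEuclideanLin M)).le_opNorm x

lemma matOpNorm_le {M : Matrix (Fin k) (Fin k) ℝ} {c : ℝ} (hc : 0 ≤ c)
    (h : ∀ x : E, ‖f M x‖ ≤ c * ‖x‖) : matOpNorm M ≤ c :=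
  ContinuousLinearMap.opNorm_le_bound _ hc h

lemma f_mul (M N : Matrix (Fin k) (Fin k) ℝ) (x : E) :
    f (M * N) x = f M (f N x) := by
  simp [toEuclideanLin_apply, mulVec_mulVec]

lemma f_one (x : E) : f (1 : Matrix (Fin k) (Fin k) ℝ) x = x := by
  apply (WithLp.equiv 2 (Fin k → ℝ)).injective
  simp [toEuclideanLin_apply, one_mulVec]

lemma inner_f_transpose (M : Matrix (Fin k) (Fin k) ℝ) (x y : E) :
    inner ℝ (f Mᵀ x) y = (inner ℝ x (f M y) : ℝ) := by
  simp only [PiLp.inner_apply, RCLike.inner_apply, conj_trivial, toEuclideanLin_apply,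
    PiLp.toLp_apply]
  rw [show ∀ a b : Fin k → ℝ, ∑ i, a i * b i = a ⬝ᵥ b from fun _ _ => rfl,
    show ∀ a b : Fin k → ℝ, ∑ i, a i * b i = a ⬝ᵥ b from fun _ _ => rfl,
    Matrix.mulVec_transpose, dotProduct_comm, ← Matrix.dotProduct_mulVec]
  exact dotProduct_comm _ _

/-- Pythagoras for a symmetric idempotent. -/
lemma proj_pyth {P : Matrix (Fin k) (Fin k) ℝ} (hPt : Pᵀ = P) (hPi : P * P = P) (x : E) :
    ‖x‖ ^ 2 = ‖f P x‖ ^ 2 + ‖x - f P x‖ ^ 2 := by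
  have h1 : (inner ℝ (f P x) (f P x) : ℝ) = inner ℝ x (f P x) := by
    have h := inner_f_transpose P x (f P x)
    rw [hPt] at h
    rw [h, ← f_mul, hPi]
  have horth : (inner ℝ (f P x) (x - f P x) : ℝ) = 0 := by
    rw [inner_sub_right, h1, real_inner_comm x (f P x), sub_self]
  have hx : x = f P x + (x - f P x) := by abel
  calc ‖x‖ ^ 2 = ‖f P x + (x - f P x)‖ ^ 2 := by rw [← hx]
    _ = ‖f P x‖ ^ 2 + 2 * inner ℝ (f P x) (x - f P x) + ‖x - f P x‖ ^ 2 :=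
        norm_add_sq_real _ _
    _ = ‖f P x‖ ^ 2 + ‖x - f P x‖ ^ 2 := by rw [horth]; ring

lemma proj_contract {P : Matrix (Fin k) (Fin k) ℝ} (hPt : Pᵀ = P) (hPi : P * P = P) (x : E) :
    ‖f P x‖ ≤ ‖x‖ := by
  have h := proj_pyth hPt hPi x
  nlinarith [norm_nonneg (f P x), norm_nonneg x, sq_nonneg ‖x - f P x‖]

lemma proj_compl_contract {P : Matrix (Fin k) (Fin k) ℝ} (hPt : Pᵀ = P) (hPi : P * P = P)
    (x : E) : ‖x - f P x‖ ≤ ‖x‖ := by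
  have h := proj_pyth hPt hPi x
  nlinarith [norm_nonneg (x - f P x), norm_nonneg x, sq_nonneg ‖f P x‖]

/-- Uniqueness of the Moore–Penrose pseudoinverse. -/
lemma isMP_unique {A B C : Matrix (Fin k) (Fin k) ℝ} (hB : IsMP A B) (hC : IsMP A C) :
    B = C := by
  obtain ⟨b1, b2, b3, b4⟩ := hB
  obtain ⟨c1, c2, c3, c4⟩ := hC
  have hAB : A * B = A * C := by
    calc A * B = (A * B)ᵀ := b3.symm
      _ = ((A * C) * (A * B))ᵀ := by
          rw [show A * C * (A * B) = A * C * A * B by noncomm_ring, c1]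
      _ = (A * B)ᵀ * (A * C)ᵀ := by rw [transpose_mul]
      _ = A * B * (A * C) := by rw [b3, c3]
      _ = A * C := by rw [show A * B * (A * C) = A * B * A * C by noncomm_ring, b1]
  have hBA : B * A = C * A := by
    calc B * A = (B * A)ᵀ := b4.symm
      _ = ((B * A) * (C * A))ᵀ := by
          rw [show B * A * (C * A) = B * (A * C * A) by noncomm_ring, c1]
      _ = (C * A)ᵀ * (B * A)ᵀ := by rw [transpose_mul]
      _ = C * A * (B * A) := by rw [b4, c4]
      _ = C * A := by rw [show C * A * (B * A) = C * (A * B * A) by noncomm_ring, b1]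
  calc B = B * A * B := b2.symm
    _ = C * A * B := by rw [hBA]
    _ = C * (A * B) := by rw [mul_assoc]
    _ = C * (A * C) := by rw [hAB]
    _ = C := by rw [← mul_assoc, c2]

lemma isMP_transpose {A B : Matrix (Fin k) (Fin k) ℝ} (h : IsMP A B) : IsMP Aᵀ Bᵀ := by
  obtain ⟨b1, b2, b3, b4⟩ := h
  refine ⟨?_, ?_, ?_, ?_⟩
  · rw [← transpose_mul, ← transpose_mul, ← mul_assoc, b1]
  · rw [← transpose_mul, ← transpose_mul, ← mul_assoc, b2]
  · calc (Aᵀ * Bᵀ)ᵀ = ((B * A)ᵀ)ᵀ := by rw [transpose_mul, transpose_transpose, transpose_transpose, transpose_transpose]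
      _ = B * A := transpose_transpose _
      _ = (B * A)ᵀ := b4.symm
      _ = Aᵀ * Bᵀ := by rw [transpose_mul]
  · calc (Bᵀ * Aᵀ)ᵀ = ((A * B)ᵀ)ᵀ := by rw [transpose_mul, transpose_transpose, transpose_transpose, transpose_transpose]
      _ = A * B := transpose_transpose _
      _ = (A * B)ᵀ := b3.symm
      _ = Bᵀ * Aᵀ := by rw [transpose_mul]

lemma inner_f_left (M : Matrix (Fin k) (Fin k) ℝ) (x y : E) :
    inner ℝ (f M x) y = (inner ℝ x (f Mᵀ y) : ℝ) := by
  have h := inner_f_transpose Mᵀ x y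
  rwa [transpose_transpose] at h

lemma norm_eq_of_sq_eq {a b : ℝ} (h : a ^ 2 = b ^ 2) (ha : 0 ≤ a) (hb : 0 ≤ b) : a = b := by
  nlinarith

lemma le_of_sq_le_sq {a b : ℝ} (h : a ^ 2 ≤ b ^ 2) (ha : 0 ≤ a) (hb : 0 ≤ b) : a ≤ b := by
  nlinarith

lemma unitary_norm {V : Matrix (Fin k) (Fin k) ℝ} (hV : Vᵀ * V = 1) (x : E) :
    ‖f V x‖ = ‖x‖ := by
  have hsq : ‖f V x‖ ^ 2 = ‖x‖ ^ 2 := by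
    rw [← real_inner_self_eq_norm_sq, ← real_inner_self_eq_norm_sq]
    rw [inner_f_left, ← f_mul, hV, f_one]
  exact norm_eq_of_sq_eq hsq (norm_nonneg _) (norm_nonneg _)

lemma norm_sq_coords (x : E) : ‖x‖ ^ 2 = ∑ i, x i ^ 2 := by
  rw [PiLp.norm_sq_eq_of_L2]
  simp [sq_abs]

lemma f_diagonal_apply (d : Fin k → ℝ) (x : E) (i : Fin k) :
    f (diagonal d) x i = d i * x i := by
  simp [toEuclideanLin_apply, PiLp.toLp_apply, mulVec_diagonal]

lemma key_conj {V : Matrix (Fin k) (Fin k) ℝ} (hVtV : Vᵀ * V = 1) (d e : Fin k → ℝ) :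
    (V * diagonal d * Vᵀ) * (V * diagonal e * Vᵀ) =
      V * diagonal (fun i => d i * e i) * Vᵀ := by
  calc (V * diagonal d * Vᵀ) * (V * diagonal e * Vᵀ)
      = V * (diagonal d * ((Vᵀ * V) * (diagonal e * Vᵀ))) := by noncomm_ring
    _ = V * (diagonal d * diagonal e) * Vᵀ := by rw [hVtV, one_mul]; noncomm_ring
    _ = V * diagonal (fun i => d i * e i) * Vᵀ := by rw [diagonal_mul_diagonal]

lemma conj_transpose_sym {V : Matrix (Fin k) (Fin k) ℝ} (d : Fin k → ℝ) :
    (V * diagonal d * Vᵀ)ᵀ = V * diagonal d * Vᵀ := by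
  rw [transpose_mul, transpose_mul, transpose_transpose, diagonal_transpose, mul_assoc]

lemma spectral_facts {A Ad : Matrix (Fin k) (Fin k) ℝ}
    (hA : A.PosSemidef) (hMP : IsMP A Ad) (h0 : A ≠ 0) :
    0 < lamStar hA ∧
    (∀ x : E, ‖f Ad x‖ ≤ (lamStar hA)⁻¹ * ‖x‖) ∧
    (∀ x : E, lamStar hA * ‖f (A * Ad) x‖ ^ 2 ≤ inner ℝ x (f A x)) := by
  classical
  set eig : Fin k → ℝ := hA.1.eigenvalues with heig
  set V : Matrix (Fin k) (Fin k) ℝ := (hA.1.eigenvectorUnitary : Matrix (Fin k) (Fin k) ℝ) with hVdef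
  have hstar : star V = Vᵀ := by
    rw [Matrix.star_eq_conjTranspose, Matrix.conjTranspose_eq_transpose_of_trivial]
  have hVtV : Vᵀ * V = 1 := by
    rw [← hstar]; exact Unitary.coe_star_mul_self hA.1.eigenvectorUnitary
  have hVVt : V * Vᵀ = 1 := by
    rw [← hstar]; exact Unitary.coe_mul_star_self hA.1.eigenvectorUnitary
  have hsp : A = V * diagonal eig * Vᵀ := by
    have h := hA.1.spectral_theorem
    rw [show (RCLike.ofReal ∘ hA.1.eigenvalues : Fin k → ℝ) = eig from funext fun i => rfl] at h
    rw [← hstar]; exact h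
  have heignn : ∀ i, 0 ≤ eig i := fun i => hA.eigenvalues_nonneg i
  -- the set of positive eigenvalues
  set S : Set ℝ := {t : ℝ | 0 < t ∧ ∃ i, hA.1.eigenvalues i = t} with hS
  have hfin : S.Finite := (Set.finite_range eig).subset (by
    rintro t ⟨ht, i, rfl⟩; exact ⟨i, rfl⟩)
  have hne : S.Nonempty := by
    by_contra hemp
    have hz : ∀ i, eig i = 0 := by
      intro i
      by_contra hi
      exact hemp ⟨eig i, lt_of_le_of_ne (heignn i) (Ne.symm hi), i, rfl⟩
    apply h0
    rw [hsp, show diagonal eig = 0 by rw [show eig = fun _ => (0:ℝ) from funext hz]; simp]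
    simp
  have hmem : lamStar hA ∈ S := hne.csInf_mem hfin
  have hpos : 0 < lamStar hA := hmem.1
  have hle : ∀ i, eig i ≠ 0 → lamStar hA ≤ eig i := fun i hi =>
    csInf_le hfin.bddBelow ⟨lt_of_le_of_ne (heignn i) (Ne.symm hi), i, rfl⟩
  set lam := lamStar hA
  set Dp : Matrix (Fin k) (Fin k) ℝ := diagonal (fun i => (eig i)⁻¹) with hDp
  -- the spectral pseudoinverse
  have hMP' : IsMP A (V * Dp * Vᵀ) := by
    refine ⟨?_, ?_, ?_, ?_⟩
    · rw [hsp, hDp, key_conj hVtV, key_conj hVtV]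
      congr 1
      · congr 1
        funext i
        by_cases hi : eig i = 0 <;> field_simp [hi]
    · rw [hsp, hDp, key_conj hVtV, key_conj hVtV]
      congr 1
      · congr 1
        funext i
        by_cases hi : eig i = 0 <;> field_simp [hi]
    · rw [hsp, hDp, key_conj hVtV, conj_transpose_sym]
    · rw [hsp, hDp, key_conj hVtV, conj_transpose_sym]
  have hAd : Ad = V * Dp * Vᵀ := isMP_unique hMP hMP'
  have hVtVt : Vᵀᵀ * Vᵀ = 1 := by rw [transpose_transpose]; exact hVVt
  refine ⟨hpos, ?_, ?_⟩
  · intro x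
    set y : E := f Vᵀ x with hy
    have hny : ‖y‖ = ‖x‖ := unitary_norm hVtVt x
    have h1 : f Ad x = f V (f Dp y) := by rw [hAd, f_mul, f_mul]
    rw [h1, unitary_norm hVtV]
    have hsq : ‖f Dp y‖ ^ 2 ≤ (lam⁻¹ * ‖y‖) ^ 2 := by
      rw [norm_sq_coords, mul_pow, norm_sq_coords, Finset.mul_sum]
      apply Finset.sum_le_sum
      intro i _
      rw [hDp, f_diagonal_apply, mul_pow]
      apply mul_le_mul_of_nonneg_right _ (sq_nonneg _)
      by_cases hi : eig i = 0
      · rw [hi]; simp [sq_nonneg]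
      · have h2 : (0:ℝ) < eig i := lt_of_le_of_ne (heignn i) (Ne.symm hi)
        have h3 : (eig i)⁻¹ ≤ lam⁻¹ := by
          apply inv_anti₀ hpos (hle i hi)
        have h4 : (0:ℝ) ≤ (eig i)⁻¹ := by positivity
        nlinarith
    have := le_of_sq_le_sq hsq (norm_nonneg _) (by positivity)
    rw [hny] at this
    exact this
  · intro x
    set y : E := f Vᵀ x with hy
    have hAAd : A * Ad = V * diagonal (fun i => eig i * (eig i)⁻¹) * Vᵀ := by
      rw [hsp, hAd, hDp, key_conj hVtV]
    have h1 : f (A * Ad) x = f V (f (diagonal fun i => eig i * (eig i)⁻¹) y) := by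
      rw [hAAd, f_mul, f_mul]
    have h2 : (inner ℝ x (f A x) : ℝ) = inner ℝ y (f (diagonal eig) y) := by
      conv_lhs => rw [hsp]
      rw [f_mul, f_mul, ← inner_f_transpose V x]
    rw [h1, unitary_norm hVtV, h2]
    rw [norm_sq_coords]
    have h3 : (inner ℝ y (f (diagonal eig) y) : ℝ) = ∑ i, y i * (eig i * y i) := by
      simp only [PiLp.inner_apply, RCLike.inner_apply, conj_trivial]
      congr 1
      funext i
      rw [f_diagonal_apply]; ring
    rw [h3, Finset.mul_sum]
    apply Finset.sum_le_sum
    intro i _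
    rw [f_diagonal_apply]
    by_cases hi : eig i = 0
    · simp [hi]
    · have h2' : (0:ℝ) < eig i := lt_of_le_of_ne (heignn i) (Ne.symm hi)
      rw [mul_inv_cancel₀ hi, one_mul]
      have := hle i hi
      nlinarith [sq_nonneg (y i)]

lemma f_sub (M N : Matrix (Fin k) (Fin k) ℝ) (x : E) :
    f (M - N) x = f M x - f N x := by
  rw [map_sub]; rfl

lemma f_add (M N : Matrix (Fin k) (Fin k) ℝ) (x : E) :
    f (M + N) x = f M x + f N x := by
  rw [map_add]; rfl

lemma f_norm_sub_comm (M N : Matrix (Fin k) (Fin k) ℝ) (x : E) :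
    ‖f (M - N) x‖ = ‖f (N - M) x‖ := by
  rw [f_sub, f_sub, norm_sub_rev]

lemma matOpNorm_zero : matOpNorm (0 : Matrix (Fin k) (Fin k) ℝ) = 0 := by
  rw [matOpNorm, map_zero, map_zero, norm_zero]

lemma rank_eq_finrank_range (M : Matrix (Fin k) (Fin k) ℝ) :
    M.rank = Module.finrank ℝ (LinearMap.range (f M)) := by
  rw [Matrix.rank]
  have hmap : LinearMap.range (f M) =
      Submodule.map ((WithLp.linearEquiv 2 ℝ (Fin k → ℝ)).symm :
        (Fin k → ℝ) ≃ₗ[ℝ] E).toLinearMap (LinearMap.range M.mulVecLin) := by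
    ext x
    simp only [LinearMap.mem_range, Submodule.mem_map]
    constructor
    · rintro ⟨v, rfl⟩
      exact ⟨M *ᵥ (WithLp.equiv 2 (Fin k → ℝ)) v, ⟨(WithLp.equiv 2 (Fin k → ℝ)) v, rfl⟩, rfl⟩
    · rintro ⟨w, ⟨v, rfl⟩, rfl⟩
      exact ⟨(WithLp.equiv 2 (Fin k → ℝ)).symm v, rfl⟩
  rw [hmap]
  exact (LinearEquiv.finrank_map_eq _ _).symm

/-- Derived identities for an MP-pseudoinverse of a symmetric matrix. -/
lemma mp_facts {A Ad : Matrix (Fin k) (Fin k) ℝ} (hsym : Aᵀ = A) (hMP : IsMP A Ad) :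
    Adᵀ = Ad ∧ Ad * A = A * Ad ∧ A * (A * Ad) = A ∧ A * (Ad * Ad) = Ad ∧
      Ad * (Ad * A) = Ad := by
  obtain ⟨b1, b2, b3, b4⟩ := hMP
  have hMPt : IsMP A Adᵀ := by
    have h := isMP_transpose ⟨b1, b2, b3, b4⟩
    rwa [hsym] at h
  have d5 : Adᵀ = Ad := isMP_unique hMPt ⟨b1, b2, b3, b4⟩
  have d1 : Ad * A = A * Ad := by
    calc Ad * A = (Ad * A)ᵀ := b4.symm
      _ = Aᵀ * Adᵀ := transpose_mul _ _
      _ = A * Ad := by rw [hsym, d5]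
  have d2 : A * (A * Ad) = A := by
    rw [← d1, show A * (Ad * A) = A * Ad * A by noncomm_ring, b1]
  have d4 : A * (Ad * Ad) = Ad := by
    rw [show A * (Ad * Ad) = (A * Ad) * Ad by noncomm_ring, ← d1,
      show Ad * A * Ad = Ad * A * Ad by rfl, b2]
  have d3 : Ad * (Ad * A) = Ad := by
    rw [d1, show Ad * (A * Ad) = Ad * A * Ad by noncomm_ring, b2]
  exact ⟨d5, d1, d2, d4, d3⟩

end PSDaux

set_option maxHeartbeats 2000000 in
open PSDaux in
/-- Rank-preserving perturbation bound for pseudoinverses of PSD matrices: there is a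
universal constant `Cc` such that whenever `A, Â` are PSD with `rank Â = rank A` and
`‖Â − A‖_op ≤ λ_*(A)/2`, one has `‖Â† − A†‖_op ≤ Cc ‖Â − A‖_op / λ_*(A)²`. -/
theorem psd_pinv_perturbation :
    ∃ Cc : ℝ, 0 < Cc ∧
      ∀ (k : ℕ) (A Ah : Matrix (Fin k) (Fin k) ℝ)
        (hA : A.PosSemidef) (hAh : Ah.PosSemidef)
        (Ad Ahd : Matrix (Fin k) (Fin k) ℝ),
        IsMP A Ad → IsMP Ah Ahd →
        Ah.rank = A.rank →
        matOpNorm (Ah - A) ≤ lamStar hA / 2 →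
        matOpNorm (Ahd - Ad) ≤ Cc * matOpNorm (Ah - A) / lamStar hA ^ 2 := by
  classical
  refine ⟨43, by norm_num, ?_⟩
  intro k A Ah hA hAh Ad Ahd hMPA hMPAh hrank hpert
  by_cases h0 : A = 0
  · -- degenerate case: A = 0 forces everything to vanish
    have hAh0 : Ah = 0 := by
      have hr : Ah.rank = 0 := by rw [hrank, h0, Matrix.rank_zero]
      rw [rank_eq_finrank_range] at hr
      have hbot : LinearMap.range (Matrix.toEuclideanLin Ah) = ⊥ :=
        Submodule.finrank_eq_zero.mp hr
      have hz : Matrix.toEuclideanLin Ah = 0 := LinearMap.range_eq_bot.mp hbot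
      apply (Matrix.toEuclideanLin (𝕜 := ℝ) (m := Fin k) (n := Fin k)).injective
      rw [hz, map_zero]
    have hAd0 : Ad = 0 := by
      have h := hMPA.2.1
      rw [h0] at h
      simpa using h.symm
    have hAhd0 : Ahd = 0 := by
      have h := hMPAh.2.1
      rw [hAh0] at h
      simpa using h.symm
    have hL : matOpNorm (Ahd - Ad) = 0 := by
      rw [hAd0, hAhd0, sub_zero, matOpNorm_zero]
    have hR : matOpNorm (Ah - A) = 0 := by
      rw [hAh0, h0, sub_zero, matOpNorm_zero]
    rw [hL, hR]
    simp
  -- main case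
  obtain ⟨hpos, hAdnorm, hAquad⟩ := spectral_facts hA hMPA h0
  set lam : ℝ := lamStar hA with hlamdef
  set eps : ℝ := matOpNorm (Ah - A) with hepsdef
  have heps0 : 0 ≤ eps := matOpNorm_nonneg _
  have hsymA : Aᵀ = A := by
    rw [← Matrix.conjTranspose_eq_transpose_of_trivial]; exact hA.1
  have hsymAh : Ahᵀ = Ah := by
    rw [← Matrix.conjTranspose_eq_transpose_of_trivial]; exact hAh.1
  obtain ⟨dA5, dA1, dA2, dA4, dA3⟩ := mp_facts hsymA hMPA
  obtain ⟨dB5, dB1, dB2, dB4, dB3⟩ := mp_facts hsymAh hMPAh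
  have hPt : (A * Ad)ᵀ = A * Ad := hMPA.2.2.1
  have hPi : (A * Ad) * (A * Ad) = A * Ad := by
    rw [show A * Ad * (A * Ad) = A * Ad * A * Ad by noncomm_ring, hMPA.1]
  have hQt : (Ah * Ahd)ᵀ = Ah * Ahd := hMPAh.2.2.1
  have hQi : (Ah * Ahd) * (Ah * Ahd) = Ah * Ahd := by
    rw [show Ah * Ahd * (Ah * Ahd) = Ah * Ahd * Ah * Ahd by noncomm_ring, hMPAh.1]
  have hQ't : (Ahd * Ah)ᵀ = Ahd * Ah := hMPAh.2.2.2
  have hQ'i : (Ahd * Ah) * (Ahd * Ah) = Ahd * Ah := by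
    rw [show Ahd * Ah * (Ahd * Ah) = (Ahd * Ah * Ahd) * Ah by noncomm_ring, hMPAh.2.1]
  -- the ranges
  set RA := LinearMap.range (Matrix.toEuclideanLin A) with hRA
  set RB := LinearMap.range (Matrix.toEuclideanLin Ah) with hRB
  have hfr : Module.finrank ℝ RA = Module.finrank ℝ RB := by
    rw [hRA, hRB, ← rank_eq_finrank_range, ← rank_eq_finrank_range, hrank]
  have hPfix : ∀ y ∈ RA, Matrix.toEuclideanLin (A * Ad) y = y := by
    rintro y ⟨w, rfl⟩
    rw [← f_mul, show A * Ad * A = A from hMPA.1]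
  set c : ℝ := eps * lam⁻¹ with hcdef
  have hc0 : 0 ≤ c := by positivity
  have hc2 : c ≤ 1 / 2 := by
    rw [hcdef]
    calc eps * lam⁻¹ ≤ (lam / 2) * lam⁻¹ := by
          apply mul_le_mul_of_nonneg_right hpert (by positivity)
      _ = 1 / 2 := by
          rw [div_mul_eq_mul_div, mul_inv_cancel₀ (ne_of_gt hpos)]
  -- step 3a : vectors in range A are moved little by Q = Ah * Ahd
  have h3a : ∀ y ∈ RA, ‖y - Matrix.toEuclideanLin (Ah * Ahd) y‖ ≤ c * ‖y‖ := by
    intro y hy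
    have hQAh : (Ah * Ahd) * Ah = Ah := hMPAh.1
    have hmid : (1 - Ah * Ahd) * ((A - Ah) * Ad) = (1 - Ah * Ahd) * (A * Ad) := by
      calc (1 - Ah * Ahd) * ((A - Ah) * Ad)
          = (A * Ad - (Ah * Ahd) * (A * Ad)) - (Ah * Ad - ((Ah * Ahd) * Ah) * Ad) := by
            noncomm_ring
        _ = (A * Ad - (Ah * Ahd) * (A * Ad)) - (Ah * Ad - Ah * Ad) := by rw [hQAh]
        _ = (1 - Ah * Ahd) * (A * Ad) := by noncomm_ring
    have e1 : y - Matrix.toEuclideanLin (Ah * Ahd) y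
        = Matrix.toEuclideanLin ((1 - Ah * Ahd) * (A * Ad)) y := by
      conv_rhs => rw [f_mul, hPfix y hy]
      rw [f_sub, f_one]
    have e2 : Matrix.toEuclideanLin ((1 - Ah * Ahd) * ((A - Ah) * Ad)) y
        = Matrix.toEuclideanLin (A - Ah) (Matrix.toEuclideanLin Ad y)
          - Matrix.toEuclideanLin (Ah * Ahd)
            (Matrix.toEuclideanLin (A - Ah) (Matrix.toEuclideanLin Ad y)) := by
      rw [f_mul, f_mul, f_sub, f_one]
    have hyq : y - Matrix.toEuclideanLin (Ah * Ahd) y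
        = Matrix.toEuclideanLin (A - Ah) (Matrix.toEuclideanLin Ad y)
          - Matrix.toEuclideanLin (Ah * Ahd)
            (Matrix.toEuclideanLin (A - Ah) (Matrix.toEuclideanLin Ad y)) := by
      rw [e1, ← hmid, e2]
    rw [hyq]
    have hwb : ‖Matrix.toEuclideanLin (A - Ah) (Matrix.toEuclideanLin Ad y)‖ ≤ c * ‖y‖ := by
      calc ‖Matrix.toEuclideanLin (A - Ah) (Matrix.toEuclideanLin Ad y)‖
          = ‖Matrix.toEuclideanLin (Ah - A) (Matrix.toEuclideanLin Ad y)‖ :=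
            f_norm_sub_comm _ _ _
        _ ≤ eps * ‖Matrix.toEuclideanLin Ad y‖ := le_matOpNorm _ _
        _ ≤ eps * (lam⁻¹ * ‖y‖) := mul_le_mul_of_nonneg_left (hAdnorm y) heps0
        _ = c * ‖y‖ := by rw [hcdef]; ring
    exact le_trans (proj_compl_contract hQt hQi _) hwb
  -- the restricted map g : RA → RB given by Q, and its surjectivity
  have hmemQ : ∀ y : RA, Matrix.toEuclideanLin (Ah * Ahd) (y : EuclideanSpace ℝ (Fin k)) ∈ RB := by
    intro y
    exact ⟨Matrix.toEuclideanLin Ahd (y : EuclideanSpace ℝ (Fin k)), (f_mul _ _ _).symm⟩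
  set g : RA →ₗ[ℝ] RB :=
    LinearMap.codRestrict RB ((Matrix.toEuclideanLin (Ah * Ahd)).comp RA.subtype) hmemQ with hg
  have hgapp : ∀ y : RA, (g y : EuclideanSpace ℝ (Fin k))
      = Matrix.toEuclideanLin (Ah * Ahd) (y : EuclideanSpace ℝ (Fin k)) := fun y => rfl
  have hginj : Function.Injective g := by
    rw [← LinearMap.ker_eq_bot, LinearMap.ker_eq_bot']
    intro y hy0
    have hQy : Matrix.toEuclideanLin (Ah * Ahd) (y : EuclideanSpace ℝ (Fin k)) = 0 := by
      rw [← hgapp y, hy0]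
      rfl
    have hb := h3a (y : EuclideanSpace ℝ (Fin k)) y.2
    rw [hQy, sub_zero] at hb
    have hz : ‖(y : EuclideanSpace ℝ (Fin k))‖ = 0 := by
      nlinarith [norm_nonneg (y : EuclideanSpace ℝ (Fin k))]
    exact Subtype.ext (norm_eq_zero.mp hz)
  have hgsurj : Function.Surjective g :=
    (LinearMap.injective_iff_surjective_of_finrank_eq_finrank hfr).mp hginj
  -- every x in RB is close to its projection onto range A
  have hclose : ∀ x ∈ RB, ‖x - Matrix.toEuclideanLin (A * Ad) x‖ ^ 2 ≤ (1 / 3) * ‖x‖ ^ 2 := by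
    intro x hx
    obtain ⟨y, hyx⟩ := hgsurj ⟨x, hx⟩
    have hQyx : Matrix.toEuclideanLin (Ah * Ahd) (y : EuclideanSpace ℝ (Fin k)) = x := by
      rw [← hgapp y, hyx]
    have hdiff : ‖(y : EuclideanSpace ℝ (Fin k)) - x‖ ≤ c * ‖(y : EuclideanSpace ℝ (Fin k))‖ := by
      have := h3a (y : EuclideanSpace ℝ (Fin k)) y.2
      rwa [hQyx] at this
    have hpyth : ‖(y : EuclideanSpace ℝ (Fin k))‖ ^ 2
        = ‖x‖ ^ 2 + ‖(y : EuclideanSpace ℝ (Fin k)) - x‖ ^ 2 := by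
      have := proj_pyth hQt hQi (y : EuclideanSpace ℝ (Fin k))
      rwa [hQyx] at this
    have hc4 : c ^ 2 ≤ 1 / 4 := by nlinarith
    have hdsq : ‖(y : EuclideanSpace ℝ (Fin k)) - x‖ ^ 2
        ≤ c ^ 2 * ‖(y : EuclideanSpace ℝ (Fin k))‖ ^ 2 := by
      have := pow_le_pow_left₀ (norm_nonneg ((y : EuclideanSpace ℝ (Fin k)) - x)) hdiff 2
      calc ‖(y : EuclideanSpace ℝ (Fin k)) - x‖ ^ 2
          ≤ (c * ‖(y : EuclideanSpace ℝ (Fin k))‖) ^ 2 := this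
        _ = c ^ 2 * ‖(y : EuclideanSpace ℝ (Fin k))‖ ^ 2 := by ring
    have hquarter : c ^ 2 * ‖(y : EuclideanSpace ℝ (Fin k))‖ ^ 2
        ≤ (1 / 4) * ‖(y : EuclideanSpace ℝ (Fin k))‖ ^ 2 :=
      mul_le_mul_of_nonneg_right hc4 (sq_nonneg _)
    have hybound : ‖(y : EuclideanSpace ℝ (Fin k))‖ ^ 2 ≤ (4 / 3) * ‖x‖ ^ 2 := by
      nlinarith
    have hPyv : Matrix.toEuclideanLin (A * Ad) (y : EuclideanSpace ℝ (Fin k))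
        = (y : EuclideanSpace ℝ (Fin k)) := hPfix _ y.2
    have hxP : x - Matrix.toEuclideanLin (A * Ad) x
        = (x - (y : EuclideanSpace ℝ (Fin k)))
          - Matrix.toEuclideanLin (A * Ad) (x - (y : EuclideanSpace ℝ (Fin k))) := by
      rw [map_sub, hPyv]; abel
    rw [hxP]
    have h1 : ‖(x - (y : EuclideanSpace ℝ (Fin k)))
        - Matrix.toEuclideanLin (A * Ad) (x - (y : EuclideanSpace ℝ (Fin k)))‖
        ≤ c * ‖(y : EuclideanSpace ℝ (Fin k))‖ := by
      calc ‖(x - (y : EuclideanSpace ℝ (Fin k)))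
          - Matrix.toEuclideanLin (A * Ad) (x - (y : EuclideanSpace ℝ (Fin k)))‖
          ≤ ‖x - (y : EuclideanSpace ℝ (Fin k))‖ := proj_compl_contract hPt hPi _
        _ = ‖(y : EuclideanSpace ℝ (Fin k)) - x‖ := norm_sub_rev _ _
        _ ≤ c * ‖(y : EuclideanSpace ℝ (Fin k))‖ := hdiff
    have h2 : (0:ℝ) ≤ ‖(x - (y : EuclideanSpace ℝ (Fin k)))
        - Matrix.toEuclideanLin (A * Ad) (x - (y : EuclideanSpace ℝ (Fin k)))‖ := norm_nonneg _
    have h3 : ‖(x - (y : EuclideanSpace ℝ (Fin k)))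
        - Matrix.toEuclideanLin (A * Ad) (x - (y : EuclideanSpace ℝ (Fin k)))‖ ^ 2
        ≤ c ^ 2 * ‖(y : EuclideanSpace ℝ (Fin k))‖ ^ 2 := by
      have := pow_le_pow_left₀ h2 h1 2
      calc ‖(x - (y : EuclideanSpace ℝ (Fin k)))
          - Matrix.toEuclideanLin (A * Ad) (x - (y : EuclideanSpace ℝ (Fin k)))‖ ^ 2
          ≤ (c * ‖(y : EuclideanSpace ℝ (Fin k))‖) ^ 2 := this
        _ = c ^ 2 * ‖(y : EuclideanSpace ℝ (Fin k))‖ ^ 2 := by ring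
    nlinarith
  -- quadratic lower bound for Ah on RB
  have hquadAh : ∀ x ∈ RB, lam / 6 * ‖x‖ ^ 2 ≤ inner ℝ x (Matrix.toEuclideanLin Ah x) := by
    intro x hx
    have hsplit : (inner ℝ x (Matrix.toEuclideanLin Ah x) : ℝ)
        = inner ℝ x (Matrix.toEuclideanLin A x) + inner ℝ x (Matrix.toEuclideanLin (Ah - A) x) := by
      rw [← inner_add_right, ← f_add, show A + (Ah - A) = Ah by abel]
    have hq := hAquad x
    have hproj : (2 / 3) * ‖x‖ ^ 2 ≤ ‖Matrix.toEuclideanLin (A * Ad) x‖ ^ 2 := by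
      have h1 := proj_pyth hPt hPi x
      have h2 := hclose x hx
      nlinarith
    have hEbound : |(inner ℝ x (Matrix.toEuclideanLin (Ah - A) x) : ℝ)| ≤ (lam / 2) * ‖x‖ ^ 2 := by
      calc |(inner ℝ x (Matrix.toEuclideanLin (Ah - A) x) : ℝ)|
          ≤ ‖x‖ * ‖Matrix.toEuclideanLin (Ah - A) x‖ := abs_real_inner_le_norm _ _
        _ ≤ ‖x‖ * (eps * ‖x‖) :=
            mul_le_mul_of_nonneg_left (le_matOpNorm _ _) (norm_nonneg _)
        _ ≤ ‖x‖ * ((lam / 2) * ‖x‖) := by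
            apply mul_le_mul_of_nonneg_left _ (norm_nonneg _)
            exact mul_le_mul_of_nonneg_right hpert (norm_nonneg _)
        _ = (lam / 2) * ‖x‖ ^ 2 := by ring
    have habs := abs_le.mp hEbound
    rw [hsplit]
    nlinarith [sq_nonneg ‖x‖]
  -- operator norm bound for Ahd
  have hAhdnorm : ∀ z : EuclideanSpace ℝ (Fin k),
      ‖Matrix.toEuclideanLin Ahd z‖ ≤ 6 * lam⁻¹ * ‖z‖ := by
    intro z
    have hxRB : Matrix.toEuclideanLin Ahd z ∈ RB := by
      rw [show Ahd = Ah * (Ahd * Ahd) from dB4.symm, f_mul]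
      exact ⟨Matrix.toEuclideanLin (Ahd * Ahd) z, rfl⟩
    have hAhx : Matrix.toEuclideanLin Ah (Matrix.toEuclideanLin Ahd z)
        = Matrix.toEuclideanLin (Ah * Ahd) z := by rw [← f_mul]
    have hQz : ‖Matrix.toEuclideanLin (Ah * Ahd) z‖ ≤ ‖z‖ := proj_contract hQt hQi z
    have hlow := hquadAh _ hxRB
    have hup : (inner ℝ (Matrix.toEuclideanLin Ahd z)
        (Matrix.toEuclideanLin Ah (Matrix.toEuclideanLin Ahd z)) : ℝ)
        ≤ ‖Matrix.toEuclideanLin Ahd z‖ * ‖z‖ := by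
      calc (inner ℝ (Matrix.toEuclideanLin Ahd z)
          (Matrix.toEuclideanLin Ah (Matrix.toEuclideanLin Ahd z)) : ℝ)
          ≤ ‖Matrix.toEuclideanLin Ahd z‖
            * ‖Matrix.toEuclideanLin Ah (Matrix.toEuclideanLin Ahd z)‖ :=
            real_inner_le_norm _ _
        _ = ‖Matrix.toEuclideanLin Ahd z‖ * ‖Matrix.toEuclideanLin (Ah * Ahd) z‖ := by
            rw [hAhx]
        _ ≤ ‖Matrix.toEuclideanLin Ahd z‖ * ‖z‖ :=
            mul_le_mul_of_nonneg_left hQz (norm_nonneg _)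
    by_cases hxz : ‖Matrix.toEuclideanLin Ahd z‖ = 0
    · rw [hxz]
      positivity
    · have hxpos : 0 < ‖Matrix.toEuclideanLin Ahd z‖ :=
        lt_of_le_of_ne (norm_nonneg _) (Ne.symm hxz)
      have h1 : lam / 6 * ‖Matrix.toEuclideanLin Ahd z‖ ^ 2
          ≤ ‖Matrix.toEuclideanLin Ahd z‖ * ‖z‖ := le_trans hlow hup
      have hkey : lam / 6 * ‖Matrix.toEuclideanLin Ahd z‖ ≤ ‖z‖ := by nlinarith
      rw [show (6:ℝ) * lam⁻¹ * ‖z‖ = (6 / lam) * ‖z‖ by field_simp]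
      rw [div_mul_eq_mul_div, le_div_iff₀ hpos] at *
      nlinarith
  -- the key algebraic identity
  have hI2 : Ahd * (Ahd * ((Ah - A) * (1 - A * Ad))) = Ahd - Ahd * (A * Ad) := by
    calc Ahd * (Ahd * ((Ah - A) * (1 - A * Ad)))
        = Ahd * (Ahd * Ah) - (Ahd * (Ahd * Ah)) * (A * Ad) - Ahd * (Ahd * A)
            + Ahd * (Ahd * (A * (A * Ad))) := by noncomm_ring
      _ = Ahd - Ahd * (A * Ad) := by rw [dB3, dA2]; noncomm_ring
  have hf1 : (Ahd * Ah) * Ah = Ah := by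
    rw [dB1, hMPAh.1]
  have hI3 : (1 - Ahd * Ah) * ((A - Ah) * (Ad * Ad)) = Ad - Ahd * (Ah * Ad) := by
    calc (1 - Ahd * Ah) * ((A - Ah) * (Ad * Ad))
        = A * (Ad * Ad) - Ah * (Ad * Ad) - (Ahd * Ah) * (A * (Ad * Ad))
            + ((Ahd * Ah) * Ah) * (Ad * Ad) := by noncomm_ring
      _ = Ad - Ahd * (Ah * Ad) := by rw [dA4, hf1]; noncomm_ring
  have hkey : Ahd - Ad = Ahd * ((A - Ah) * Ad)
      + Ahd * (Ahd * ((Ah - A) * (1 - A * Ad)))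
      - (1 - Ahd * Ah) * ((A - Ah) * (Ad * Ad)) := by
    rw [hI2, hI3]
    noncomm_ring
  -- final norm bound
  apply matOpNorm_le (by positivity)
  intro x
  rw [hkey]
  have hT1 : ‖Matrix.toEuclideanLin (Ahd * ((A - Ah) * Ad)) x‖
      ≤ 6 * lam⁻¹ * (eps * (lam⁻¹ * ‖x‖)) := by
    rw [f_mul, f_mul]
    calc ‖Matrix.toEuclideanLin Ahd (Matrix.toEuclideanLin (A - Ah)
            (Matrix.toEuclideanLin Ad x))‖
        ≤ 6 * lam⁻¹ * ‖Matrix.toEuclideanLin (A - Ah) (Matrix.toEuclideanLin Ad x)‖ :=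
          hAhdnorm _
      _ ≤ 6 * lam⁻¹ * (eps * (lam⁻¹ * ‖x‖)) := by
          apply mul_le_mul_of_nonneg_left _ (by positivity)
          calc ‖Matrix.toEuclideanLin (A - Ah) (Matrix.toEuclideanLin Ad x)‖
              = ‖Matrix.toEuclideanLin (Ah - A) (Matrix.toEuclideanLin Ad x)‖ :=
                f_norm_sub_comm _ _ _
            _ ≤ eps * ‖Matrix.toEuclideanLin Ad x‖ := le_matOpNorm _ _
            _ ≤ eps * (lam⁻¹ * ‖x‖) := mul_le_mul_of_nonneg_left (hAdnorm x) heps0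
  have hT2 : ‖Matrix.toEuclideanLin (Ahd * (Ahd * ((Ah - A) * (1 - A * Ad)))) x‖
      ≤ 6 * lam⁻¹ * (6 * lam⁻¹ * (eps * ‖x‖)) := by
    rw [f_mul, f_mul, f_mul]
    have hinner : ‖Matrix.toEuclideanLin (Ah - A)
        (Matrix.toEuclideanLin (1 - A * Ad) x)‖ ≤ eps * ‖x‖ := by
      calc ‖Matrix.toEuclideanLin (Ah - A) (Matrix.toEuclideanLin (1 - A * Ad) x)‖
          ≤ eps * ‖Matrix.toEuclideanLin (1 - A * Ad) x‖ := le_matOpNorm _ _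
        _ ≤ eps * ‖x‖ := by
            apply mul_le_mul_of_nonneg_left _ heps0
            rw [f_sub, f_one]
            exact proj_compl_contract hPt hPi x
    calc ‖Matrix.toEuclideanLin Ahd (Matrix.toEuclideanLin Ahd
            (Matrix.toEuclideanLin (Ah - A) (Matrix.toEuclideanLin (1 - A * Ad) x)))‖
        ≤ 6 * lam⁻¹ * ‖Matrix.toEuclideanLin Ahd (Matrix.toEuclideanLin (Ah - A)
            (Matrix.toEuclideanLin (1 - A * Ad) x))‖ := hAhdnorm _
      _ ≤ 6 * lam⁻¹ * (6 * lam⁻¹ * (eps * ‖x‖)) := by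
          apply mul_le_mul_of_nonneg_left _ (by positivity)
          calc ‖Matrix.toEuclideanLin Ahd (Matrix.toEuclideanLin (Ah - A)
                  (Matrix.toEuclideanLin (1 - A * Ad) x))‖
              ≤ 6 * lam⁻¹ * ‖Matrix.toEuclideanLin (Ah - A)
                  (Matrix.toEuclideanLin (1 - A * Ad) x)‖ := hAhdnorm _
            _ ≤ 6 * lam⁻¹ * (eps * ‖x‖) :=
                mul_le_mul_of_nonneg_left hinner (by positivity)
  have hT3 : ‖Matrix.toEuclideanLin ((1 - Ahd * Ah) * ((A - Ah) * (Ad * Ad))) x‖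
      ≤ eps * (lam⁻¹ * (lam⁻¹ * ‖x‖)) := by
    rw [f_mul]
    have hwb : ‖Matrix.toEuclideanLin ((A - Ah) * (Ad * Ad)) x‖
        ≤ eps * (lam⁻¹ * (lam⁻¹ * ‖x‖)) := by
      rw [f_mul, f_mul]
      calc ‖Matrix.toEuclideanLin (A - Ah) (Matrix.toEuclideanLin Ad
              (Matrix.toEuclideanLin Ad x))‖
          = ‖Matrix.toEuclideanLin (Ah - A) (Matrix.toEuclideanLin Ad
              (Matrix.toEuclideanLin Ad x))‖ := f_norm_sub_comm _ _ _
        _ ≤ eps * ‖Matrix.toEuclideanLin Ad (Matrix.toEuclideanLin Ad x)‖ :=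
            le_matOpNorm _ _
        _ ≤ eps * (lam⁻¹ * ‖Matrix.toEuclideanLin Ad x‖) :=
            mul_le_mul_of_nonneg_left (hAdnorm _) heps0
        _ ≤ eps * (lam⁻¹ * (lam⁻¹ * ‖x‖)) := by
            apply mul_le_mul_of_nonneg_left _ heps0
            exact mul_le_mul_of_nonneg_left (hAdnorm x) (by positivity)
    calc ‖Matrix.toEuclideanLin (1 - Ahd * Ah)
          (Matrix.toEuclideanLin ((A - Ah) * (Ad * Ad)) x)‖
        ≤ ‖Matrix.toEuclideanLin ((A - Ah) * (Ad * Ad)) x‖ := by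
          rw [f_sub, f_one]
          exact proj_compl_contract hQ't hQ'i _
      _ ≤ eps * (lam⁻¹ * (lam⁻¹ * ‖x‖)) := hwb
  have htri : ‖Matrix.toEuclideanLin (Ahd * ((A - Ah) * Ad)
      + Ahd * (Ahd * ((Ah - A) * (1 - A * Ad)))
      - (1 - Ahd * Ah) * ((A - Ah) * (Ad * Ad))) x‖
      ≤ ‖Matrix.toEuclideanLin (Ahd * ((A - Ah) * Ad)) x‖
        + ‖Matrix.toEuclideanLin (Ahd * (Ahd * ((Ah - A) * (1 - A * Ad)))) x‖
        + ‖Matrix.toEuclideanLin ((1 - Ahd * Ah) * ((A - Ah) * (Ad * Ad))) x‖ := by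
    rw [f_sub, f_add]
    exact le_trans (norm_sub_le _ _) (add_le_add_left (norm_add_le _ _) _)
  have hsum : 6 * lam⁻¹ * (eps * (lam⁻¹ * ‖x‖))
      + 6 * lam⁻¹ * (6 * lam⁻¹ * (eps * ‖x‖))
      + eps * (lam⁻¹ * (lam⁻¹ * ‖x‖)) = 43 * eps / lam ^ 2 * ‖x‖ := by
    field_simp
    ring
  calc ‖Matrix.toEuclideanLin (Ahd * ((A - Ah) * Ad)
        + Ahd * (Ahd * ((Ah - A) * (1 - A * Ad)))
        - (1 - Ahd * Ah) * ((A - Ah) * (Ad * Ad))) x‖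
      ≤ _ + _ + _ := htri
    _ ≤ 6 * lam⁻¹ * (eps * (lam⁻¹ * ‖x‖)) + 6 * lam⁻¹ * (6 * lam⁻¹ * (eps * ‖x‖))
        + eps * (lam⁻¹ * (lam⁻¹ * ‖x‖)) := add_le_add (add_le_add hT1 hT2) hT3
    _ = 43 * eps / lam ^ 2 * ‖x‖ := hsum
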